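/- Griesmer bound: if C is an F₂-linear subspace of F₂ⁿ of dimension k ≥ 1 all of whose nonzero codewords have Hamming weight at least d (with d ≥ 1), then n ≥ ∑_{i=0}^{k-1} ⌈d / 2^i⌉. -/

import Mathlib

open Finset Module

set_option maxHeartbeats 1000000

private lemma zmod2_cases (a : ZMod 2) : a = 0 ∨ a = 1 := by revert a; decide

private lemma zmod2_add_eq_zero {a b : ZMod 2} (h : a + b = 0) : a = b := by
  revert a b; decide

private lemma griesmer_aux : ∀ (k : ℕ) (ι : Type) [Fintype ι] [DecidableEq ι]
    (C : Submodule (ZMod 2) (ι → ZMod 2)) (d : ℕ),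
    Module.finrank (ZMod 2) C = k → 1 ≤ k → 1 ≤ d →
    (∀ c ∈ C, c ≠ 0 → d ≤ hammingNorm c) →
    Fintype.card ι ≥ ∑ i ∈ Finset.range k, ⌈(d : ℚ) / 2 ^ i⌉₊ := by
  intro k
  induction k with
  | zero => intro ι _ _ C d _ hk; omega
  | succ k ih =>
    intro ι _ _ C d hdim hk hd hmin
    classical
    -- C is nonzero, get a nonzero codeword
    have hCne : C ≠ ⊥ := by
      intro h
      rw [h] at hdim
      simp [finrank_bot] at hdim
    obtain ⟨x0, hx0C, hx0ne⟩ := (Submodule.ne_bot_iff C).mp hCne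
    -- choose codeword of minimum weight
    have hP : ∃ m, ∃ x ∈ C, x ≠ 0 ∧ hammingNorm x = m := ⟨_, x0, hx0C, hx0ne, rfl⟩
    set w := Nat.find hP with hw
    obtain ⟨c0, hc0C, hc0ne, hc0w⟩ := Nat.find_spec hP
    have hwmin : ∀ x ∈ C, x ≠ 0 → w ≤ hammingNorm x := by
      intro x hx hxne
      exact Nat.find_min' hP ⟨x, hx, hxne, rfl⟩
    have hdw : d ≤ w := by rw [hw, ← hc0w]; exact hmin c0 hc0C hc0ne
    have hw1 : 1 ≤ w := le_trans hd hdw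
    -- the support of c0
    set S : Finset ι := univ.filter (fun i => c0 i ≠ 0) with hS
    set T : Finset ι := univ.filter (fun i => c0 i = 0) with hT
    have hScard : S.card = w := hc0w
    have hTcard : T.card = Fintype.card ι - w := by
      have := Finset.card_filter_add_card_filter_not (s := univ)
        (p := fun i => c0 i = 0)
      have hST : T.card + S.card = Fintype.card ι := by
        simpa [hS, hT, Finset.card_univ] using this
      omega
    have hwn : w ≤ Fintype.card ι := by
      rw [← hScard]; exact (Finset.card_filter_le _ _).trans (by simp)
    -- splitting the hamming norm
    have hsplit : ∀ z : ι → ZMod 2,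
        hammingNorm z = (S.filter (fun i => z i ≠ 0)).card
          + (T.filter (fun i => z i ≠ 0)).card := by
      intro z
      have h1 : S.filter (fun i => z i ≠ 0)
          = (univ.filter (fun i => z i ≠ 0)).filter (fun i => c0 i ≠ 0) := by
        simp only [hS, Finset.filter_filter]
        exact Finset.filter_congr (by tauto)
      have h2 : T.filter (fun i => z i ≠ 0)
          = (univ.filter (fun i => z i ≠ 0)).filter (fun i => ¬ c0 i ≠ 0) := by
        simp only [hT, Finset.filter_filter, not_not]
        exact Finset.filter_congr (by tauto)
      rw [h1, h2, Finset.card_filter_add_card_filter_not]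
      rfl
    -- counting on the support for z = x + c0
    have hadd : ∀ x : ι → ZMod 2,
        (S.filter (fun i => (x + c0) i ≠ 0)).card
          = w - (S.filter (fun i => x i ≠ 0)).card := by
      intro x
      have h1 : S.filter (fun i => (x + c0) i ≠ 0)
          = S.filter (fun i => ¬ x i ≠ 0) := by
        apply Finset.filter_congr
        intro i hi
        have hc1 : c0 i = 1 := by
          have := (Finset.mem_filter.mp hi).2
          rcases zmod2_cases (c0 i) with h | h
          · exact absurd h this
          · exact h
        simp only [Pi.add_apply, hc1, not_not]
        rcases zmod2_cases (x i) with h | h <;> simp [h] <;> decide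
      rw [h1, ← hScard]
      have := Finset.card_filter_add_card_filter_not (s := S)
        (p := fun i => x i ≠ 0)
      omega
    have haleS : ∀ x : ι → ZMod 2, (S.filter (fun i => x i ≠ 0)).card ≤ w := by
      intro x
      rw [← hScard]; exact Finset.card_filter_le _ _
    rcases Nat.eq_zero_or_pos k with hk0 | hk1
    · -- base case: k = 0
      subst hk0
      have hsum1 : ∑ i ∈ Finset.range (0+1), ⌈(d : ℚ) / 2 ^ i⌉₊ = d := by simp
      rw [hsum1]
      omega
    · -- inductive step
      -- the residual code
      set π : (ι → ZMod 2) →ₗ[ZMod 2] ({i : ι // c0 i = 0} → ZMod 2) :=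
        LinearMap.funLeft (ZMod 2) (ZMod 2) (fun j : {i : ι // c0 i = 0} => (j : ι)) with hπ
      have hπc0 : π c0 = 0 := by
        funext j
        exact j.2
      have hcard' : Fintype.card {i : ι // c0 i = 0} = Fintype.card ι - w := by
        rw [Fintype.card_subtype, ← hTcard, hT]
      -- relate hammingNorm of projection to the T-filter
      have hproj : ∀ x : ι → ZMod 2,
          hammingNorm (π x) = (T.filter (fun i => x i ≠ 0)).card := by
        intro x
        have h1 : hammingNorm (π x) = Fintype.card {j : {i : ι // c0 i = 0} // x j.1 ≠ 0} := by
          rw [Fintype.card_subtype]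
          rfl
        rw [h1, Fintype.card_congr (Equiv.subtypeSubtypeEquivSubtypeInter (fun i => c0 i = 0)
          (fun i => x i ≠ 0)), Fintype.card_subtype]
        rw [hT, Finset.filter_filter]
      set f : C →ₗ[ZMod 2] ({i : ι // c0 i = 0} → ZMod 2) := π.comp C.subtype with hf
      -- kernel of f is the span of c0
      have hker : LinearMap.ker f = Submodule.span (ZMod 2) {(⟨c0, hc0C⟩ : C)} := by
        apply le_antisymm
        · rintro ⟨x, hxC⟩ hx
          have hπx : π x = 0 := hx
          have hTzero : (T.filter (fun i => x i ≠ 0)).card = 0 := by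
            rw [← hproj, hπx, hammingNorm_zero]
          by_cases hxne : x = 0
          · simp [hxne]
            exact Submodule.zero_mem _
          · have ha : (S.filter (fun i => x i ≠ 0)).card = w := by
              have := hwmin x hxC hxne
              rw [hsplit x] at this
              have := haleS x
              omega
            have hxc0 : x + c0 = 0 := by
              by_contra hne
              have := hwmin (x + c0) (C.add_mem hxC hc0C) hne
              rw [hsplit (x + c0), hadd x, ha] at this
              have h2 : (T.filter (fun i => (x + c0) i ≠ 0)).card = 0 := by
                rw [Finset.card_eq_zero] at hTzero ⊢
                rw [Finset.filter_eq_empty_iff] at hTzero ⊢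
                intro i hi
                have hc0i : c0 i = 0 := by
                  have h' := hi
                  rw [hT] at h'
                  simpa using h'
                simp only [Pi.add_apply, hc0i, add_zero, not_not]
                have := hTzero hi
                simpa using this
              omega
            have hxeq : x = c0 := funext fun i => zmod2_add_eq_zero (congrFun hxc0 i)
            apply Submodule.subset_span
            simp only [Set.mem_singleton_iff]
            exact Subtype.ext hxeq
        · rw [Submodule.span_le]
          rintro _ rfl
          exact hπc0
      have hc0ne' : (⟨c0, hc0C⟩ : C) ≠ 0 := by
        intro h
        exact hc0ne (congrArg Subtype.val h)
      have hkerrank : finrank (ZMod 2) (LinearMap.ker f) = 1 := by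
        rw [hker]
        exact finrank_span_singleton hc0ne'
      have hrange : LinearMap.range f = C.map π := by
        rw [hf, LinearMap.range_comp, Submodule.range_subtype]
      have hrank' : finrank (ZMod 2) (C.map π) = k := by
        have := LinearMap.finrank_range_add_finrank_ker f
        rw [hkerrank, hdim, hrange] at this
        omega
      -- residual minimum distance
      set d' : ℕ := ⌈(w : ℚ) / 2⌉₊ with hd'
      have hd'1 : 1 ≤ d' := by
        rw [hd', Nat.one_le_ceil_iff]
        positivity
      have hres : ∀ y ∈ C.map π, y ≠ 0 → d' ≤ hammingNorm y := by
        rintro y ⟨x, hxC, rfl⟩ hyne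
        have hxne : x ≠ 0 := by rintro rfl; exact hyne (map_zero π)
        set a := (S.filter (fun i => x i ≠ 0)).card with ha
        set b := (T.filter (fun i => x i ≠ 0)).card with hb
        have h1 : w ≤ a + b := by
          have := hwmin x hxC hxne
          rwa [hsplit x] at this
        have hxc0ne : x + c0 ≠ 0 := by
          intro h
          have hxeq : x = c0 := funext fun i => zmod2_add_eq_zero (congrFun h i)
          rw [hxeq, hπc0] at hyne
          exact hyne rfl
        have h2 : w ≤ (w - a) + (T.filter (fun i => (x + c0) i ≠ 0)).card := by
          have := hwmin (x + c0) (C.add_mem hxC hc0C) hxc0ne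
          rwa [hsplit (x + c0), hadd x] at this
        have h3 : (T.filter (fun i => (x + c0) i ≠ 0)).card = b := by
          rw [hb]
          congr 1
          apply Finset.filter_congr
          intro i hi
          have hc0i : c0 i = 0 := by
            rw [hT] at hi
            simpa using hi
          simp [hc0i]
        rw [h3] at h2
        have hab : a ≤ b := by
          have := haleS x
          omega
        have hw2b : w ≤ 2 * b := by omega
        rw [hproj x, ← hb, hd']
        rw [Nat.ceil_le]
        rw [div_le_iff₀ (by norm_num : (0:ℚ) < 2)]
        exact_mod_cast by push_cast; nlinarith [hw2b]
      -- apply induction hypothesis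
      have hIH := ih {i : ι // c0 i = 0} (C.map π) d' hrank' hk1 hd'1 hres
      rw [hcard'] at hIH
      -- put everything together
      have hsum : ∑ i ∈ Finset.range (k+1), ⌈(d : ℚ) / 2 ^ i⌉₊
          ≤ w + ∑ i ∈ Finset.range k, ⌈(d' : ℚ) / 2 ^ i⌉₊ := by
        have hmono : ∑ i ∈ Finset.range (k+1), ⌈(d : ℚ) / 2 ^ i⌉₊
            ≤ ∑ i ∈ Finset.range (k+1), ⌈(w : ℚ) / 2 ^ i⌉₊ := by
          apply Finset.sum_le_sum
          intro i _
          apply Nat.ceil_le_ceil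
          apply div_le_div_of_nonneg_right _ (by positivity)
          exact_mod_cast hdw
        have hterm : ∀ i : ℕ, ⌈(w : ℚ) / 2 ^ (i+1)⌉₊ ≤ ⌈(d' : ℚ) / 2 ^ i⌉₊ := by
          intro i
          apply Nat.ceil_le_ceil
          have h1 : (w : ℚ) / 2 ^ (i+1) = ((w : ℚ) / 2) / 2 ^ i := by
            rw [div_div, ← pow_succ']
          rw [h1]
          apply div_le_div_of_nonneg_right _ (by positivity)
          exact Nat.le_ceil _
        calc ∑ i ∈ Finset.range (k+1), ⌈(d : ℚ) / 2 ^ i⌉₊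
            ≤ ∑ i ∈ Finset.range (k+1), ⌈(w : ℚ) / 2 ^ i⌉₊ := hmono
          _ = (∑ i ∈ Finset.range k, ⌈(w : ℚ) / 2 ^ (i+1)⌉₊) + ⌈(w : ℚ) / 2 ^ 0⌉₊ :=
              Finset.sum_range_succ' _ _
          _ ≤ (∑ i ∈ Finset.range k, ⌈(d' : ℚ) / 2 ^ i⌉₊) + w := by
              apply add_le_add
              · exact Finset.sum_le_sum fun i _ => hterm i
              · simp
          _ = w + ∑ i ∈ Finset.range k, ⌈(d' : ℚ) / 2 ^ i⌉₊ := add_comm _ _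
      omega

theorem griesmer_bound {n k d : ℕ}
    (C : Submodule (ZMod 2) (Fin n → ZMod 2))
    (hdim : Module.finrank (ZMod 2) C = k) (hk : 1 ≤ k) (hd : 1 ≤ d)
    (hmin : ∀ c ∈ C, c ≠ 0 → d ≤ hammingNorm c) :
    n ≥ ∑ i ∈ Finset.range k, ⌈(d : ℚ) / 2 ^ i⌉₊ := by
  have := griesmer_aux k (Fin n) C d hdim hk hd hmin
  simpa using this
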